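/- arXiv:2301.09752 — 7 statements merged into one kernel-verified Lean document; each statement's English description precedes it below -/
import Mathlib

section
/- Let f be a two-interval PAM given by rationals a1, b1, a2, b2, c that maps [0,1) ∩ ℚ into [0,1) ∩ ℚ, is injective on [0,1) ∩ ℚ, satisfies the twist condition, and suppose a2 < 0 and a2 + b2 < c < a2*c + b2 (the cutpoint c lies in the interior of f([c,1))). Set c' = (c − b2)/a2 and define g : ℚ → ℚ by g(x) = a2*x + b2 for c ≤ x ≤ c', g(x) = a1*(a2*x + b2) + b1 for c' < x < 1, and g(x) = 0 otherwise. Then: (i) g maps [c,1) ∩ ℚ into [c,1) ∩ ℚ, and (ii) for all x0, t ∈ [c,1) ∩ ℚ, there exists n : ℕ with f^[n] x0 = t if and only if there exists m : ℕ with g^[m] x0 = t. -/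
/-- The two-interval piecewise affine map on `[0,1) ∩ ℚ` given by rationals
`a1, b1, a2, b2, c`. -/
def pam2 (a1 b1 a2 b2 c : ℚ) (x : ℚ) : ℚ :=
  if 0 ≤ x ∧ x < c then a1 * x + b1
  else if c ≤ x ∧ x < 1 then a2 * x + b2
  else 0

/-- The auxiliary map `g` of Lemma 4: with `c' = (c - b2)/a2`,
`g(x) = f₂(x)` on `[c, c']`, `g(x) = f₁(f₂(x))` on `(c', 1)`, and `0` otherwise. -/
def gAux (a1 b1 a2 b2 c : ℚ) (x : ℚ) : ℚ :=
  if c ≤ x ∧ x ≤ (c - b2) / a2 then a2 * x + b2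
  else if (c - b2) / a2 < x ∧ x < 1 then a1 * (a2 * x + b2) + b1
  else 0

/-- Reachability questions for `f` on `[c,1)` reduce to reachability questions for
the auxiliary map `g`, which maps `[c,1) ∩ ℚ` into itself. -/
theorem pam_reduction_to_gAux (a1 b1 a2 b2 c : ℚ)
    (hc0 : 0 < c) (hc1 : c < 1)
    (hmap : ∀ x ∈ Set.Ico (0 : ℚ) 1, pam2 a1 b1 a2 b2 c x ∈ Set.Ico (0 : ℚ) 1)
    (hinj : Set.InjOn (pam2 a1 b1 a2 b2 c) (Set.Ico (0 : ℚ) 1))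
    (htwist : ∀ x ∈ Set.Ico c 1, ∀ y ∈ Set.Ico (0 : ℚ) c,
      pam2 a1 b1 a2 b2 c x < pam2 a1 b1 a2 b2 c y)
    (ha2 : a2 < 0)
    (hcut1 : a2 + b2 < c) (hcut2 : c < a2 * c + b2) :
    (∀ x ∈ Set.Ico c 1, gAux a1 b1 a2 b2 c x ∈ Set.Ico c 1) ∧
    (∀ x0 ∈ Set.Ico c 1, ∀ t ∈ Set.Ico c 1,
      ((∃ n : ℕ, (pam2 a1 b1 a2 b2 c)^[n] x0 = t) ↔
        (∃ m : ℕ, (gAux a1 b1 a2 b2 c)^[m] x0 = t))) := by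
  set f := pam2 a1 b1 a2 b2 c with hfdef
  set g := gAux a1 b1 a2 b2 c with hgdef
  set c' := (c - b2) / a2 with hc'def
  have ha2' : a2 ≠ 0 := ne_of_lt ha2
  have hc'eq : a2 * c' + b2 = c := by
    rw [hc'def, mul_comm, div_mul_cancel₀ (c - b2) ha2']; ring
  have hcc' : c < c' := by nlinarith
  have hc'1 : c' < 1 := by nlinarith
  -- value formulas for f
  have hfval2 : ∀ x : ℚ, c ≤ x → x < 1 → f x = a2 * x + b2 := by
    intro x h1 h2
    simp [hfdef, pam2, h1, h2, not_lt.mpr h1]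
  have hfval1 : ∀ x : ℚ, 0 ≤ x → x < c → f x = a1 * x + b1 := by
    intro x h1 h2
    simp [hfdef, pam2, h1, h2]
  have hmap2 : ∀ x : ℚ, c ≤ x → x < 1 → 0 ≤ a2 * x + b2 ∧ a2 * x + b2 < 1 := by
    intro x h1 h2
    have := hmap x ⟨le_trans hc0.le h1, h2⟩
    rw [hfval2 x h1 h2] at this
    exact ⟨this.1, this.2⟩
  -- case A : x ∈ [c, c']
  have hA : ∀ x : ℚ, c ≤ x → x ≤ c' → (c ≤ f x ∧ f x < 1) ∧ g x = f x := by
    intro x h1 h2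
    have hx1 : x < 1 := lt_of_le_of_lt h2 hc'1
    have hfx : f x = a2 * x + b2 := hfval2 x h1 hx1
    have hge : c ≤ a2 * x + b2 := by nlinarith
    have hlt : a2 * x + b2 < 1 := (hmap2 x h1 hx1).2
    refine ⟨⟨by rw [hfx]; exact hge, by rw [hfx]; exact hlt⟩, ?_⟩
    rw [hfx]
    simp [hgdef, gAux, h1, show x ≤ (c - b2) / a2 from h2]
  -- case B : x ∈ (c', 1)
  have hB : ∀ x : ℚ, c' < x → x < 1 →
      (0 ≤ f x ∧ f x < c) ∧ (c ≤ f (f x) ∧ f (f x) < 1) ∧ g x = f (f x) := by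
    intro x h1 h2
    have hcx : c ≤ x := le_of_lt (lt_trans hcc' h1)
    have hfx : f x = a2 * x + b2 := hfval2 x hcx h2
    have hfx0 : 0 ≤ f x := by rw [hfx]; exact (hmap2 x hcx h2).1
    have hfxc : f x < c := by rw [hfx]; nlinarith
    have hffx01 : f (f x) ∈ Set.Ico (0:ℚ) 1 :=
      hmap (f x) ⟨hfx0, lt_trans hfxc hc1⟩
    have hcfc' : f c' = c := by rw [hfval2 c' hcc'.le hc'1]; exact hc'eq
    have htw := htwist c' ⟨hcc'.le, hc'1⟩ (f x) ⟨hfx0, hfxc⟩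
    rw [hcfc'] at htw
    have hgx : g x = a1 * (a2 * x + b2) + b1 := by
      have hnot : ¬ (c ≤ x ∧ x ≤ c') := by
        rintro ⟨-, h⟩; exact absurd h (not_le.mpr h1)
      simp [hgdef, gAux, hnot, h1, h2, show (c - b2) / a2 < x from h1,
        show ¬ (c ≤ x ∧ x ≤ (c - b2) / a2) from hnot]
    have hffx : f (f x) = a1 * (a2 * x + b2) + b1 := by
      rw [hfval1 (f x) hfx0 hfxc, hfx]
    exact ⟨⟨hfx0, hfxc⟩, ⟨htw.le, hffx01.2⟩, by rw [hgx, hffx]⟩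
  -- part (i)
  have hgmap : ∀ x : ℚ, c ≤ x → x < 1 → c ≤ g x ∧ g x < 1 := by
    intro x h1 h2
    by_cases h : x ≤ c'
    · obtain ⟨⟨u, v⟩, w⟩ := hA x h1 h
      exact ⟨by rw [w]; exact u, by rw [w]; exact v⟩
    · obtain ⟨-, ⟨u, v⟩, w⟩ := hB x (not_le.mp h) h2
      exact ⟨by rw [w]; exact u, by rw [w]; exact v⟩
  -- forward : f-reachable points of [c,1) are g-reachable
  have fwd : ∀ n : ℕ, ∀ x : ℚ, c ≤ x → x < 1 → c ≤ f^[n] x →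
      ∃ m : ℕ, g^[m] x = f^[n] x := by
    intro n
    induction n using Nat.strong_induction_on with
    | _ n ih =>
      intro x hx1 hx2 hfn
      match n with
      | 0 => exact ⟨0, rfl⟩
      | Nat.succ n =>
        by_cases h : x ≤ c'
        · obtain ⟨⟨u, v⟩, w⟩ := hA x hx1 h
          have hrw : f^[n + 1] x = f^[n] (f x) := Function.iterate_succ_apply f n x
          rw [hrw] at hfn ⊢
          obtain ⟨m, hm⟩ := ih n (Nat.lt_succ_self n) (f x) u v hfn
          exact ⟨m + 1, by rw [Function.iterate_succ_apply, w, hm]⟩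
        · have h' := not_le.mp h
          obtain ⟨⟨u0, uc⟩, ⟨v1, v2⟩, w⟩ := hB x h' hx2
          match n with
          | 0 =>
            exfalso
            rw [Function.iterate_one] at hfn
            exact absurd uc (not_lt.mpr hfn)
          | Nat.succ n =>
            have hrw : f^[n + 1 + 1] x = f^[n] (f (f x)) := by
              rw [Function.iterate_succ_apply, Function.iterate_succ_apply]
            rw [hrw] at hfn ⊢
            obtain ⟨m, hm⟩ := ih n (by omega) (f (f x)) v1 v2 hfn
            exact ⟨m + 1, by rw [Function.iterate_succ_apply, w, hm]⟩
  -- backward : g-iterates are f-iterates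
  have bwd : ∀ m : ℕ, ∀ x : ℚ, c ≤ x → x < 1 → ∃ n : ℕ, f^[n] x = g^[m] x := by
    intro m
    induction m with
    | zero => exact fun x _ _ => ⟨0, rfl⟩
    | succ m ih =>
      intro x hx1 hx2
      obtain ⟨hg1, hg2⟩ := hgmap x hx1 hx2
      obtain ⟨n, hn⟩ := ih (g x) hg1 hg2
      rw [← Function.iterate_succ_apply g m x] at hn
      by_cases h : x ≤ c'
      · obtain ⟨-, w⟩ := hA x hx1 h
        exact ⟨n + 1, by rw [Function.iterate_succ_apply, ← w, hn]⟩
      · obtain ⟨-, -, w⟩ := hB x (not_le.mp h) hx2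
        refine ⟨n + 2, ?_⟩
        rw [show n + 2 = n + 1 + 1 from rfl, Function.iterate_succ_apply,
          Function.iterate_succ_apply, ← w, hn]
  refine ⟨fun x hx => ?_, fun x0 hx0 t ht => ?_⟩
  · obtain ⟨u, v⟩ := hgmap x hx.1 hx.2
    exact ⟨u, v⟩
  · constructor
    · rintro ⟨n, hn⟩
      obtain ⟨m, hm⟩ := fwd n x0 hx0.1 hx0.2 (by rw [hn]; exact ht.1)
      exact ⟨m, by rw [hm, hn]⟩
    · rintro ⟨m, hm⟩
      obtain ⟨n, hn⟩ := bwd m x0 hx0.1 hx0.2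
      exact ⟨n, by rw [hn, hm]⟩
end

section
/- Let c, d be rationals in (0,1) with c + d < 1, let f be the bijective two-interval PAM determined by c and d (viewed as a map ℝ → ℝ), let α = (1−c−d)/(c·d), h(x) = Real.log (α·x + 1) / Real.log (α + 1), and τ = h(d). Then for every x ∈ [0,1), h (f x) = Int.fract (h x + τ); that is, f is topologically conjugate via h to the rotation of ℝ/ℤ by τ. -/
/-- The bijective two-interval PAM determined by `c, d ∈ (0,1)`, as a map `ℝ → ℝ`:
it sends `[0,c)` onto `[d,1)` and `[c,1)` onto `[0,d)`. -/
noncomputable def bpamR (c d : ℝ) (x : ℝ) : ℝ :=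
  if 0 ≤ x ∧ x < c then (1 - d) / c * x + d
  else if c ≤ x ∧ x < 1 then d / (1 - c) * x - c * d / (1 - c)
  else 0

/-- The conjugating homeomorphism `h(x) = log (α x + 1) / log (α + 1)`. -/
noncomputable def hFun (α x : ℝ) : ℝ := Real.log (α * x + 1) / Real.log (α + 1)

set_option maxHeartbeats 1600000 in
theorem aux_real (c d α : ℝ) (hc0 : 0 < c) (hc1 : c < 1) (hd0 : 0 < d)
    (hcd : c + d < 1) (hαdef : α = (1 - c - d) / (c * d)) :
    ∀ x ∈ Set.Ico (0 : ℝ) 1,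
      hFun α (bpamR c d x) = Int.fract (hFun α x + hFun α d) := by
  have hd1 : d < 1 := by linarith
  have hα : 0 < α := by rw [hαdef]; exact div_pos (by linarith) (mul_pos hc0 hd0)
  have hL : 0 < Real.log (α + 1) := Real.log_pos (by linarith)
  have hc0' : c ≠ 0 := ne_of_gt hc0
  have hc1' : (1 : ℝ) - c ≠ 0 := by linarith
  have hd0' : d ≠ 0 := ne_of_gt hd0
  have hprod : (α * c + 1) * (α * d + 1) = α + 1 := by
    rw [hαdef]; field_simp; ring
  have hαd1 : (0:ℝ) < α * d + 1 := by positivity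
  have hα1 : (0:ℝ) < α + 1 := by positivity
  intro x hx
  obtain ⟨hx0, hx1⟩ := hx
  have hαx1 : (0:ℝ) < α * x + 1 := by nlinarith
  by_cases hxc : x < c
  · -- first branch
    have hf : bpamR c d x = (1 - d) / c * x + d := by
      simp [bpamR, hx0, hxc]
    have e1 : α * ((1 - d) / c * x + d) + 1 = (α * x + 1) * (α * d + 1) := by
      rw [hαdef]; field_simp; ring
    have hlog : Real.log ((α * x + 1) * (α * d + 1)) =
        Real.log (α * x + 1) + Real.log (α * d + 1) :=
      Real.log_mul (ne_of_gt hαx1) (ne_of_gt hαd1)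
    have hhx0 : 0 ≤ hFun α x + hFun α d := by
      have h1 : 0 ≤ Real.log (α * x + 1) := Real.log_nonneg (by nlinarith)
      have h2 : 0 ≤ Real.log (α * d + 1) := Real.log_nonneg (by nlinarith)
      have := div_nonneg h1 hL.le
      have := div_nonneg h2 hL.le
      unfold hFun; positivity
    have hhx1 : hFun α x + hFun α d < 1 := by
      have hlt : (α * x + 1) * (α * d + 1) < α + 1 := by
        rw [← hprod]
        have h : α * x + 1 < α * c + 1 := by nlinarith
        exact mul_lt_mul_of_pos_right h hαd1
      have : Real.log ((α * x + 1) * (α * d + 1)) < Real.log (α + 1) :=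
        Real.log_lt_log (by positivity) hlt
      rw [hlog] at this
      unfold hFun
      rw [← add_div, div_lt_one hL]
      exact this
    rw [hf, Int.fract_eq_self.2 ⟨hhx0, hhx1⟩]
    unfold hFun
    rw [e1, hlog, add_div]
  · -- second branch
    push_neg at hxc
    have hf : bpamR c d x = d / (1 - c) * x - c * d / (1 - c) := by
      simp [bpamR, bpamR, hxc, hx1, not_lt.2 hxc]
    have e2 : α * (d / (1 - c) * x - c * d / (1 - c)) + 1 =
        (α * x + 1) * (α * d + 1) / (α + 1) := by
      rw [eq_div_iff (ne_of_gt hα1), hαdef]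
      field_simp
      ring
    have hlog : Real.log ((α * x + 1) * (α * d + 1) / (α + 1)) =
        Real.log (α * x + 1) + Real.log (α * d + 1) - Real.log (α + 1) := by
      rw [Real.log_div (by positivity) (ne_of_gt hα1),
        Real.log_mul (ne_of_gt hαx1) (ne_of_gt hαd1)]
    have key : hFun α (d / (1 - c) * x - c * d / (1 - c)) = hFun α x + hFun α d - 1 := by
      unfold hFun
      rw [e2, hlog]
      field_simp
    have hge : 1 ≤ hFun α x + hFun α d := by
      have hge' : α + 1 ≤ (α * x + 1) * (α * d + 1) := by
        rw [← hprod]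
        have h : α * c + 1 ≤ α * x + 1 := by nlinarith
        exact mul_le_mul_of_nonneg_right h hαd1.le
      have : Real.log (α + 1) ≤ Real.log ((α * x + 1) * (α * d + 1)) :=
        Real.log_le_log hα1 hge'
      rw [Real.log_mul (ne_of_gt hαx1) (ne_of_gt hαd1)] at this
      unfold hFun
      rw [← add_div, le_div_iff₀ hL, one_mul]
      exact this
    have hlt2 : hFun α x + hFun α d < 2 := by
      have h1 : hFun α x < 1 := by
        unfold hFun
        rw [div_lt_one hL]
        exact Real.log_lt_log hαx1 (by nlinarith)
      have h2 : hFun α d < 1 := by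
        unfold hFun
        rw [div_lt_one hL]
        exact Real.log_lt_log hαd1 (by nlinarith)
      linarith
    rw [hf, key]
    have : hFun α x + hFun α d = (hFun α x + hFun α d - 1) + 1 := by ring
    rw [this, Int.fract_add_one, Int.fract_eq_self.2 ⟨by linarith, by linarith⟩]
    ring


/-- When `c + d < 1`, the bijective two-interval PAM determined by `c` and `d` is
topologically conjugate, via `h`, to the rotation of `ℝ/ℤ` by `τ = h(d)`. -/
theorem bpam_conjugate_to_rotation (c d : ℚ)
    (hc0 : 0 < c) (hc1 : c < 1) (hd0 : 0 < d) (hd1 : d < 1)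
    (hcd : c + d < 1) :
    ∀ x ∈ Set.Ico (0 : ℝ) 1,
      hFun ((1 - c - d) / (c * d) : ℝ) (bpamR (c : ℝ) (d : ℝ) x) =
        Int.fract (hFun ((1 - c - d) / (c * d) : ℝ) x +
          hFun ((1 - c - d) / (c * d) : ℝ) (d : ℝ)) := by
  have := aux_real (c : ℝ) (d : ℝ) _ (by exact_mod_cast hc0) (by exact_mod_cast hc1)
    (by exact_mod_cast hd0) (by exact_mod_cast hcd) rfl
  intro x hx
  convert this x hx using 3 <;> push_cast <;> ring
end

section
/- Let c, d be rationals in (0,1) with c + d < 1, let f be the bijective two-interval PAM determined by c and d, and let α = (1−c−d)/(c·d). Then for all rationals x0, t ∈ [0,1): there exists n : ℕ with f^[n] x0 = t if and only if there exist n, m : ℕ with (α + 1)^m = ((α·x0 + 1)/(α·t + 1)) · (α·d + 1)^n. -/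
/-- The bijective two-interval PAM determined by `c, d ∈ (0,1)`, as a map `ℚ → ℚ`:
it sends `[0,c)` onto `[d,1)` and `[c,1)` onto `[0,d)`. -/
def bpamQ (c d : ℚ) (x : ℚ) : ℚ :=
  if 0 ≤ x ∧ x < c then (1 - d) / c * x + d
  else if c ≤ x ∧ x < 1 then d / (1 - c) * x - c * d / (1 - c)
  else 0

lemma bpam_step (c d : ℚ)
    (hc0 : 0 < c) (hc1 : c < 1) (hd0 : 0 < d) (hd1 : d < 1)
    {x : ℚ} (hx : x ∈ Set.Ico (0:ℚ) 1) :
    bpamQ c d x ∈ Set.Ico (0:ℚ) 1 ∧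
    ∃ e : ℕ,
      (((1 - c - d) / (c * d)) * bpamQ c d x + 1) * (((1 - c - d) / (c * d)) + 1) ^ e
        = (((1 - c - d) / (c * d)) * x + 1) * (((1 - c - d) / (c * d)) * d + 1) := by
  obtain ⟨hx0, hx1⟩ := hx
  have hcne : c ≠ 0 := hc0.ne'
  have hdne : d ≠ 0 := hd0.ne'
  have h1c : (0:ℚ) < 1 - c := by linarith
  have h1cne : (1:ℚ) - c ≠ 0 := h1c.ne'
  by_cases h : x < c
  · have hfx : bpamQ c d x = (1 - d) / c * x + d := by
      simp [bpamQ, hx0, h]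
    have hs : (0:ℚ) < (1 - d) / c := div_pos (by linarith) hc0
    have hsc : (1 - d) / c * c = 1 - d := div_mul_cancel₀ _ hcne
    refine ⟨⟨?_, ?_⟩, 0, ?_⟩
    · rw [hfx]; nlinarith [mul_nonneg hs.le hx0]
    · rw [hfx]
      have : (1 - d) / c * x < (1 - d) / c * c := by
        exact mul_lt_mul_of_pos_left h hs
      rw [hsc] at this; linarith
    · rw [hfx]
      field_simp
      ring
  · have hcx : c ≤ x := le_of_not_gt h
    have hfx : bpamQ c d x = d / (1 - c) * x - c * d / (1 - c) := by
      rw [bpamQ, if_neg (by push_neg; intro _; exact hcx), if_pos ⟨hcx, hx1⟩]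
    have hs : (0:ℚ) < d / (1 - c) := div_pos hd0 h1c
    refine ⟨⟨?_, ?_⟩, 1, ?_⟩
    · rw [hfx]
      have : d / (1 - c) * c ≤ d / (1 - c) * x := mul_le_mul_of_nonneg_left hcx hs.le
      have h2 : d / (1 - c) * c = c * d / (1 - c) := by ring
      linarith [h2 ▸ this]
    · rw [hfx]
      have h3 : d / (1 - c) * x < d / (1 - c) * 1 := by
        exact mul_lt_mul_of_pos_left hx1 hs
      have h4 : d / (1 - c) * 1 - c * d / (1 - c) = d := by
        field_simp
      nlinarith [h3, h4]
    · rw [hfx]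
      field_simp
      ring

lemma bpam_iter (c d : ℚ)
    (hc0 : 0 < c) (hc1 : c < 1) (hd0 : 0 < d) (hd1 : d < 1)
    {x : ℚ} (hx : x ∈ Set.Ico (0:ℚ) 1) (n : ℕ) :
    (bpamQ c d)^[n] x ∈ Set.Ico (0:ℚ) 1 ∧
    ∃ m : ℕ,
      (((1 - c - d) / (c * d)) * ((bpamQ c d)^[n] x) + 1) * (((1 - c - d) / (c * d)) + 1) ^ m
        = (((1 - c - d) / (c * d)) * x + 1) * (((1 - c - d) / (c * d)) * d + 1) ^ n := by
  induction n with
  | zero => exact ⟨hx, 0, by simp⟩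
  | succ n ih =>
    obtain ⟨hmem, m, hm⟩ := ih
    obtain ⟨hmem', e, he⟩ := bpam_step c d hc0 hc1 hd0 hd1 hmem
    rw [Function.iterate_succ_apply']
    refine ⟨hmem', m + e, ?_⟩
    rw [pow_add, pow_succ]
    linear_combination ((1 - c - d) / (c * d) + 1) ^ m * he +
      ((1 - c - d) / (c * d) * d + 1) * hm


/-- Reachability for the bijective two-interval PAM with `c + d < 1` is equivalent to
the solvability of the exponential Diophantine equation
`(α+1)^m = ((α x₀ + 1)/(α t + 1)) (α d + 1)^n` where `α = (1-c-c)/(cd)`. -/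
theorem bpam_reachability_iff_exponential_equation (c d : ℚ)
    (hc0 : 0 < c) (hc1 : c < 1) (hd0 : 0 < d) (hd1 : d < 1)
    (hcd : c + d < 1)
    (x0 t : ℚ) (hx0 : x0 ∈ Set.Ico (0 : ℚ) 1) (ht : t ∈ Set.Ico (0 : ℚ) 1) :
    (∃ n : ℕ, (bpamQ c d)^[n] x0 = t) ↔
      (∃ n m : ℕ,
        ((1 - c - d) / (c * d) + 1) ^ m =
          (((1 - c - d) / (c * d)) * x0 + 1) / (((1 - c - d) / (c * d)) * t + 1) *
            (((1 - c - d) / (c * d)) * d + 1) ^ n) := by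
  set α : ℚ := (1 - c - d) / (c * d) with hα
  have hαpos : 0 < α := div_pos (by linarith) (by positivity)
  have hA : (1:ℚ) < α + 1 := by linarith
  have hApos : (0:ℚ) < α + 1 := by linarith
  have htpos : (0:ℚ) < α * t + 1 := by nlinarith [ht.1]
  have htlt : α * t + 1 < α + 1 := by nlinarith [ht.2]
  have ht1 : (1:ℚ) ≤ α * t + 1 := by nlinarith [ht.1]
  -- cancellation lemma
  have key : ∀ a b : ℚ, ∀ p q : ℕ, 1 ≤ a → a < α + 1 → 1 ≤ b → b < α + 1 →
      a * (α + 1) ^ p = b * (α + 1) ^ q → a = b := by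
    intro a b p q h1 h2 h3 h4 heq
    rcases le_total p q with hle | hle
    · obtain ⟨k, rfl⟩ : ∃ k, q = p + k := ⟨q - p, by omega⟩
      rw [pow_add] at heq
      have hp : (0:ℚ) < (α + 1) ^ p := pow_pos hApos p
      have heq2 : a = b * (α + 1) ^ k := by
        apply mul_right_cancel₀ hp.ne'
        linear_combination heq
      rcases Nat.eq_zero_or_pos k with rfl | hk
      · simpa using heq2
      · exfalso
        have : (α + 1) ^ 1 ≤ (α + 1) ^ k := pow_le_pow_right₀ (by linarith) hk
        have : α + 1 ≤ (α + 1) ^ k := by simpa using this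
        nlinarith [heq2]
    · obtain ⟨k, rfl⟩ : ∃ k, p = q + k := ⟨p - q, by omega⟩
      rw [pow_add] at heq
      have hq : (0:ℚ) < (α + 1) ^ q := pow_pos hApos q
      have heq2 : a * (α + 1) ^ k = b := by
        apply mul_right_cancel₀ hq.ne'
        linear_combination heq
      rcases Nat.eq_zero_or_pos k with rfl | hk
      · simpa using heq2
      · exfalso
        have : (α + 1) ^ 1 ≤ (α + 1) ^ k := pow_le_pow_right₀ (by linarith) hk
        have : α + 1 ≤ (α + 1) ^ k := by simpa using this
        nlinarith [heq2]
  constructor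
  · rintro ⟨n, hn⟩
    obtain ⟨-, m, hm⟩ := bpam_iter c d hc0 hc1 hd0 hd1 hx0 n
    rw [hn] at hm
    refine ⟨n, m, ?_⟩
    rw [div_mul_eq_mul_div, eq_div_iff htpos.ne']
    linear_combination hm
  · rintro ⟨n, m, heq⟩
    obtain ⟨hmem, m', hm'⟩ := bpam_iter c d hc0 hc1 hd0 hd1 hx0 n
    refine ⟨n, ?_⟩
    have heq2 : (α * t + 1) * (α + 1) ^ m = (α * x0 + 1) * (α * d + 1) ^ n := by
      rw [div_mul_eq_mul_div, eq_div_iff htpos.ne'] at heq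
      linear_combination heq
    have hy1 : (1:ℚ) ≤ α * ((bpamQ c d)^[n] x0) + 1 := by nlinarith [hmem.1]
    have hy2 : α * ((bpamQ c d)^[n] x0) + 1 < α + 1 := by nlinarith [hmem.2]
    have := key _ _ m' m hy1 hy2 ht1 htlt (by rw [hm', ← heq2])
    have h2 : α * ((bpamQ c d)^[n] x0) = α * t := by linarith
    exact mul_left_cancel₀ hαpos.ne' h2
end

section
/- For all rationals q1, q2 with q1 > 1 and q2 > 1, the real number Real.log q1 / Real.log q2 is rational if and only if there exist natural numbers a, b with 0 < a, 0 < b, and q1^b = q2^a. -/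
/-- For rationals `q1, q2 > 1`, the ratio `log q1 / log q2` is rational if and only if
`q1^b = q2^a` for some positive naturals `a, b`. -/
theorem log_ratio_rational_iff (q1 q2 : ℚ) (h1 : 1 < q1) (h2 : 1 < q2) :
    (∃ r : ℚ, Real.log (q1 : ℝ) / Real.log (q2 : ℝ) = (r : ℝ)) ↔
      ∃ a b : ℕ, 0 < a ∧ 0 < b ∧ q1 ^ b = q2 ^ a := by
  have hq1 : (1:ℝ) < (q1:ℝ) := by exact_mod_cast h1
  have hq2 : (1:ℝ) < (q2:ℝ) := by exact_mod_cast h2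
  have hl1 : 0 < Real.log q1 := Real.log_pos hq1
  have hl2 : 0 < Real.log q2 := Real.log_pos hq2
  constructor
  · rintro ⟨r, hr⟩
    have hrpos : (0:ℝ) < (r:ℝ) := hr ▸ div_pos hl1 hl2
    have hrpos' : 0 < r := by exact_mod_cast hrpos
    have hnum : 0 < r.num := Rat.num_pos.mpr hrpos'
    refine ⟨r.num.toNat, r.den, by omega, r.pos, ?_⟩
    have hd : ((r.den : ℝ)) ≠ 0 := by positivity
    have h1' : Real.log q1 = (r:ℝ) * Real.log q2 := by
      rw [div_eq_iff hl2.ne'] at hr; linarith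
    have hcast : (r:ℝ) = (r.num : ℝ) / (r.den : ℝ) := by
      rw [Rat.cast_def]
    have hlog : (r.den : ℝ) * Real.log q1 = (r.num : ℝ) * Real.log q2 := by
      rw [h1', hcast]; field_simp
    have hntn : ((r.num.toNat : ℕ) : ℝ) = (r.num : ℝ) := by
      exact_mod_cast Int.toNat_of_nonneg hnum.le
    have hlogpow : Real.log ((q1:ℝ) ^ r.den) = Real.log ((q2:ℝ) ^ r.num.toNat) := by
      rw [Real.log_pow, Real.log_pow, hntn]
      exact hlog
    have hposL : (0:ℝ) < (q1:ℝ) ^ r.den := by positivity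
    have hposR : (0:ℝ) < (q2:ℝ) ^ r.num.toNat := by positivity
    have : ((q1:ℝ)) ^ r.den = (q2:ℝ) ^ r.num.toNat := by
      have := congrArg Real.exp hlogpow
      rwa [Real.exp_log hposL, Real.exp_log hposR] at this
    exact_mod_cast this
  · rintro ⟨a, b, ha, hb, hab⟩
    refine ⟨(a : ℚ) / (b : ℚ), ?_⟩
    have habR : ((q1:ℝ)) ^ b = (q2:ℝ) ^ a := by exact_mod_cast hab
    have hlog : (b:ℝ) * Real.log q1 = (a:ℝ) * Real.log q2 := by
      have := congrArg Real.log habR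
      rwa [Real.log_pow, Real.log_pow] at this
    have hbR : ((b:ℝ)) ≠ 0 := by positivity
    push_cast
    rw [div_eq_div_iff hl2.ne' hbR]
    linarith
end

section
/- Let f : ℚ → ℚ be defined by f(x) = (4/3)·x if 0 ≤ x < 1/2, f(x) = (4/3)·x − 1/3 if 1/2 ≤ x < 1, and f(x) = 0 otherwise. Then the orbit {f^[n] (1/5) : n ∈ ℕ} is an infinite set. -/
/-- The expanding two-interval PAM `f(x) = (4/3)x` on `[0,1/2)`,
`f(x) = (4/3)x - 1/3` on `[1/2,1)`, and `0` otherwise. -/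
def fExp (x : ℚ) : ℚ :=
  if 0 ≤ x ∧ x < 1 / 2 then 4 / 3 * x
  else if 1 / 2 ≤ x ∧ x < 1 then 4 / 3 * x - 1 / 3
  else 0

lemma fExp_key : ∀ n : ℕ, ∃ a : ℤ, ¬ (3:ℤ) ∣ a ∧ (n = 0 → a = 1) ∧
    fExp^[n] (1/5) = (a : ℚ) / (5 * 3 ^ n) ∧
    0 ≤ fExp^[n] (1/5) ∧ fExp^[n] (1/5) < 1 := by
  intro n
  induction n with
  | zero => exact ⟨1, by norm_num, fun _ => rfl, by norm_num, by norm_num, by norm_num⟩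
  | succ m ih =>
    obtain ⟨a, h3, h0, heq, hle, hlt⟩ := ih
    rw [Function.iterate_succ_apply']
    set x := fExp^[m] (1/5) with hx
    by_cases hhalf : x < 1/2
    · refine ⟨4 * a, ?_, by simp, ?_, ?_, ?_⟩
      · intro h; exact h3 (by omega)
      · rw [fExp, if_pos ⟨hle, hhalf⟩, heq]
        push_cast
        rw [pow_succ]
        ring
      · rw [fExp, if_pos ⟨hle, hhalf⟩]; positivity
      · rw [fExp, if_pos ⟨hle, hhalf⟩]; linarith
    · push_neg at hhalf
      rcases Nat.eq_zero_or_pos m with hm | hm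
      · exfalso
        have := h0 hm
        subst this hm
        simp only [Function.iterate_zero, id] at hx
        rw [hx] at hhalf
        norm_num at hhalf
      refine ⟨4 * a - 5 * 3 ^ m, ?_, by simp, ?_, ?_, ?_⟩
      · intro h
        have h5 : (3:ℤ) ∣ 5 * 3 ^ m := by
          exact Dvd.dvd.mul_left (dvd_pow_self 3 (by omega)) 5
        have : (3:ℤ) ∣ 4 * a := by omega
        exact h3 (by omega)
      · rw [fExp, if_neg (by push_neg; intro _; exact hhalf),
          if_pos ⟨hhalf, hlt⟩, heq]
        push_cast
        rw [pow_succ]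
        have h1 : ((5:ℚ) * 3 ^ m) ≠ 0 := by positivity
        field_simp
      · rw [fExp, if_neg (by push_neg; intro _; exact hhalf),
          if_pos ⟨hhalf, hlt⟩]
        linarith
      · rw [fExp, if_neg (by push_neg; intro _; exact hhalf),
          if_pos ⟨hhalf, hlt⟩]
        linarith

lemma fExp_ne : ∀ m n : ℕ, m < n → fExp^[m] (1/5) ≠ fExp^[n] (1/5) := by
  intro m n hmn h
  obtain ⟨a, ha3, -, ha, -, -⟩ := fExp_key m
  obtain ⟨b, hb3, -, hb, -, -⟩ := fExp_key n
  rw [ha, hb] at h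
  have hQ : (a : ℚ) * (5 * 3 ^ n) = (b : ℚ) * (5 * 3 ^ m) := by
    field_simp at h
    linarith [h]
  have hZ : a * (5 * 3 ^ n) = b * (5 * 3 ^ m) := by exact_mod_cast hQ
  apply hb3
  obtain ⟨k, hk⟩ := Nat.exists_eq_add_of_lt hmn
  subst hk
  have h3m : (0:ℤ) < 3 ^ m := by positivity
  have : a * 3 ^ (k + 1) = b := by
    have : a * 3 ^ (m + k + 1) = b * 3 ^ m := by linarith [hZ]
    have h2 : a * 3 ^ (k + 1) * 3 ^ m = b * 3 ^ m := by rw [← this, pow_add]; ring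
    exact mul_right_cancel₀ (ne_of_gt h3m) h2
  rw [← this]
  exact Dvd.dvd.mul_left (dvd_pow_self 3 (Nat.succ_ne_zero k)) a

/-- The orbit of `1/5` under `fExp` is infinite. -/
theorem fExp_orbit_infinite :
    (Set.range fun n : ℕ => fExp^[n] (1 / 5)).Infinite := by
  apply Set.infinite_range_of_injective
  intro m n h
  rcases lt_trichotomy m n with hmn | hmn | hmn
  · exact absurd h (fExp_ne m n hmn)
  · exact hmn
  · exact absurd h.symm (fExp_ne n m hmn)
end

section
/- Let f : ℚ → ℚ be defined by f(x) = (4/3)·x if 0 ≤ x < 1/2, f(x) = (4/3)·x − 1/3 if 1/2 ≤ x < 1, and f(x) = 0 otherwise. Then for every n : ℕ, the 3-adic valuation strictly decreases along the orbit of 1/5: padicValRat 3 (f^[n+1] (1/5)) < padicValRat 3 (f^[n] (1/5)). -/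
lemma fExp_orbit (n : ℕ) : ∃ a : ℤ, 0 < a ∧ ¬ (3 : ℤ) ∣ a ∧ (a : ℚ) < 3 ^ n * 5 ∧
    (n = 0 → a = 1) ∧ fExp^[n] (1 / 5) = (a : ℚ) / (3 ^ n * 5) := by
  induction n with
  | zero => exact ⟨1, by norm_num⟩
  | succ n ih =>
    obtain ⟨a, hpos, hdvd, hlt, hzero, heq⟩ := ih
    have hden : (0 : ℚ) < 3 ^ n * 5 := by positivity
    have hx0 : (0 : ℚ) < (a : ℚ) / (3 ^ n * 5) := by positivity
    have hx1 : (a : ℚ) / (3 ^ n * 5) < 1 := (div_lt_one hden).mpr hlt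
    rw [Function.iterate_succ_apply', heq]
    unfold fExp
    by_cases h : (a : ℚ) / (3 ^ n * 5) < 1 / 2
    · rw [if_pos ⟨le_of_lt hx0, h⟩]
      refine ⟨4 * a, by positivity, ?_, ?_, by simp, ?_⟩
      · intro h3
        exact hdvd ((Int.prime_three.dvd_mul.mp h3).resolve_left (by norm_num))
      · push_cast
        have : (a : ℚ) < 3 ^ n * 5 / 2 := (lt_div_iff₀ (by norm_num)).mpr <| by
          have := (div_lt_div_iff₀ hden (by norm_num)).mp h; linarith
        ring_nf
        ring_nf at this
        nlinarith [this]
      · push_cast; field_simp; ring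
    · rw [if_neg (by tauto), if_pos ⟨le_of_not_gt h, hx1⟩]
      push_neg at h
      have hn : n ≠ 0 := by
        rintro rfl
        have := hzero rfl
        subst this
        norm_num at h
      refine ⟨4 * a - 5 * 3 ^ n, ?_, ?_, ?_, by simp, ?_⟩
      · have := (le_div_iff₀ hden).mp h
        have : (5 : ℚ) * 3 ^ n ≤ 2 * a := by push_cast at this ⊢; linarith
        have h2 : (5 : ℤ) * 3 ^ n ≤ 2 * a := by exact_mod_cast this
        nlinarith [hpos]
      · intro h3
        obtain ⟨m, rfl⟩ := Nat.exists_eq_succ_of_ne_zero hn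
        have : (3 : ℤ) ∣ 4 * a := by
          have : (3 : ℤ) ∣ 5 * 3 ^ (m + 1) := ⟨5 * 3 ^ m, by ring⟩
          omega
        exact hdvd ((Int.prime_three.dvd_mul.mp this).resolve_left (by norm_num))
      · push_cast
        rw [pow_succ]
        linarith [hlt]
      · push_cast; field_simp; ring

lemma fExp_val (n : ℕ) : padicValRat 3 (fExp^[n] (1 / 5)) = -(n : ℤ) := by
  obtain ⟨a, hpos, hdvd, -, -, heq⟩ := fExp_orbit n
  have ha : (a : ℚ) ≠ 0 := by exact_mod_cast hpos.ne'
  have hden : ((3 : ℚ) ^ n * 5) ≠ 0 := by positivity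
  haveI : Fact (Nat.Prime 3) := ⟨by norm_num⟩
  rw [heq, padicValRat.div (p := 3) ha hden,
    padicValRat.mul (p := 3) (by positivity) (by norm_num),
    padicValRat.pow (p := 3) (3 : ℚ)]
  have hself : padicValRat 3 (3:ℚ) = 1 := by
    have := padicValRat.self (p := 3) (by norm_num)
    simpa using this
  have h1 : padicValRat 3 (a : ℚ) = 0 := by
    rw [padicValRat.of_int, padicValInt.eq_zero_of_not_dvd (by exact_mod_cast hdvd)]
    simp
  have h2 : padicValRat 3 (5 : ℚ) = 0 := by
    rw [show ((5:ℚ)) = ((5:ℤ):ℚ) by norm_num, padicValRat.of_int,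
      padicValInt.eq_zero_of_not_dvd (by norm_num)]
    simp
  rw [h1, h2, hself]
  ring

/-- The 3-adic valuation strictly decreases along the orbit of `1/5` under `fExp`. -/
theorem fExp_padicValRat_strict_anti (n : ℕ) :
    padicValRat 3 (fExp^[n + 1] (1 / 5)) < padicValRat 3 (fExp^[n] (1 / 5)) := by
  rw [fExp_val, fExp_val]
  push_cast
  omega
end

section
/- Let f : ℝ → ℝ be an expanding PAM: there exist ℓ ≥ 1, rationals 0 = c₀ < c₁ < ... < c_ℓ = 1, and rationals a₁, b₁, ..., a_ℓ, b_ℓ with aₖ > 1 for every k, such that f(x) = aₖ·x + bₖ for all x ∈ [c_{k−1}, c_k) and each k in 1..ℓ, and f maps [0,1) into [0,1). Then for every x₀ ∈ [0,1), either the orbit O = {f^[n] x₀ : n ∈ ℕ} is a finite set, or the set of accumulation points of O (points p ∈ ℝ such that every open neighbourhood of p contains a point of O different from p) is infinite. -/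
open Set Filter Function

/-- If the orbit repeats, it is finite. -/
private lemma pam_orbit_finite_of_repeat {f : ℝ → ℝ} {x0 : ℝ} {m n : ℕ}
    (hmn : m < n) (heq : f^[m] x0 = f^[n] x0) :
    (Set.range fun k : ℕ => f^[k] x0).Finite := by
  have key : ∀ k : ℕ, ∃ j, j < n ∧ f^[j] x0 = f^[k] x0 := by
    intro k
    induction k using Nat.strong_induction_on with
    | _ k ih =>
      by_cases hk : k < n
      · exact ⟨k, hk, rfl⟩
      · push_neg at hk
        have h1 : f^[k] x0 = f^[(k - n) + m] x0 := by
          have hk' : k = (k - n) + n := by omega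
          conv_lhs => rw [hk', Function.iterate_add_apply]
          rw [← heq, ← Function.iterate_add_apply]
        have h2 : (k - n) + m < k := by omega
        obtain ⟨j, hj, hj2⟩ := ih _ h2
        exact ⟨j, hj, by rw [hj2, ← h1]⟩
  apply Set.Finite.subset ((Set.finite_Iio n).image fun j => f^[j] x0)
  rintro y ⟨k, rfl⟩
  obtain ⟨j, hj, hj2⟩ := key k
  exact ⟨j, hj, hj2⟩

/-- For an expanding PAM (all slopes `> 1`) mapping `[0,1)` into itself, every orbit
is either finite or has infinitely many accumulation points. -/
theorem expanding_pam_finite_or_infinitely_many_accumulation_points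
    (f : ℝ → ℝ) (ℓ : ℕ) (hℓ : 1 ≤ ℓ)
    (cs : ℕ → ℚ) (a b : ℕ → ℚ)
    (hc0 : cs 0 = 0) (hcl : cs ℓ = 1)
    (hmono : ∀ k, k < ℓ → cs k < cs (k + 1))
    (hslope : ∀ k, 1 ≤ k → k ≤ ℓ → 1 < a k)
    (haff : ∀ k, 1 ≤ k → k ≤ ℓ → ∀ x : ℝ,
      (cs (k - 1) : ℝ) ≤ x → x < (cs k : ℝ) → f x = (a k : ℝ) * x + (b k : ℝ))
    (hmap : ∀ x ∈ Set.Ico (0 : ℝ) 1, f x ∈ Set.Ico (0 : ℝ) 1) :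
    ∀ x0 ∈ Set.Ico (0 : ℝ) 1,
      (Set.range fun n : ℕ => f^[n] x0).Finite ∨
      {p : ℝ | AccPt p (Filter.principal (Set.range fun n : ℕ => f^[n] x0))}.Infinite := by
  intro x0 hx0
  by_cases hfin : (Set.range fun n : ℕ => f^[n] x0).Finite
  · exact Or.inl hfin
  right
  by_contra hinfA
  rw [Set.not_infinite] at hinfA
  set O : Set ℝ := Set.range fun n : ℕ => f^[n] x0 with hOdef
  -- the orbit stays in [0,1)
  have horb : ∀ n : ℕ, f^[n] x0 ∈ Set.Ico (0 : ℝ) 1 := by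
    intro n
    induction n with
    | zero => simpa using hx0
    | succ n ih => rw [Function.iterate_succ_apply']; exact hmap _ ih
  have hObd : O ⊆ Set.Icc (0 : ℝ) 1 := by
    rintro y ⟨n, rfl⟩
    exact ⟨(horb n).1, le_of_lt (horb n).2⟩
  -- the orbit map is injective
  have hinj : Function.Injective fun n : ℕ => f^[n] x0 := by
    intro m n hmne
    by_contra hne
    rcases Nat.lt_or_ge m n with h | h
    · exact hfin (pam_orbit_finite_of_repeat h hmne)
    · have h' : n < m := by omega
      exact hfin (pam_orbit_finite_of_repeat h' hmne.symm)
  have hOinf : O.Infinite := hfin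
  -- uniform lower bound on the slopes
  obtain ⟨lam, hlam1, hlam⟩ : ∃ lam : ℝ, 1 < lam ∧ ∀ k, 1 ≤ k → k ≤ ℓ → lam ≤ (a k : ℝ) := by
    have hne : ((Finset.Icc 1 ℓ).image a).Nonempty :=
      ⟨a 1, Finset.mem_image_of_mem a (Finset.mem_Icc.2 ⟨le_refl 1, hℓ⟩)⟩
    obtain ⟨k0, hk0, hk0e⟩ := Finset.mem_image.1 (((Finset.Icc 1 ℓ).image a).min'_mem hne)
    refine ⟨((((Finset.Icc 1 ℓ).image a).min' hne : ℚ) : ℝ), ?_, ?_⟩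
    · rw [← hk0e]
      have := hslope k0 (Finset.mem_Icc.1 hk0).1 (Finset.mem_Icc.1 hk0).2
      exact_mod_cast this
    · intro k h1 h2
      have : (((Finset.Icc 1 ℓ).image a).min' hne) ≤ a k :=
        Finset.min'_le _ _ (Finset.mem_image_of_mem a (Finset.mem_Icc.2 ⟨h1, h2⟩))
      exact_mod_cast this
  have hlam0 : (0 : ℝ) < lam := by linarith
  -- one-sided affine data at any admissible point
  have hside : ∀ σ : ℝ, (σ = 1 ∨ σ = -1) → ∀ p : ℝ, 0 ≤ p → p ≤ 1 →
      (σ = 1 → p < 1) → (σ = -1 → 0 < p) →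
      ∃ α q δ : ℝ, lam ≤ α ∧ 0 < δ ∧
        ∀ x : ℝ, 0 < σ * (x - p) → σ * (x - p) < δ → f x = α * (x - p) + q := by
    rintro σ (rfl | rfl) p hp0 hp1 hs1 hs2
    · -- right side
      have hplt : p < 1 := hs1 rfl
      have hex : ∃ k : ℕ, p < (cs k : ℝ) := ⟨ℓ, by rw [hcl]; exact_mod_cast hplt⟩
      set k := Nat.find hex with hkdef
      have hk : p < (cs k : ℝ) := Nat.find_spec hex
      have hk1 : 1 ≤ k := by
        rcases Nat.eq_zero_or_pos k with h | h
        · exfalso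
          have := hk
          rw [h, hc0] at this
          norm_num at this
          linarith
        · exact h
      have hkl : k ≤ ℓ := Nat.find_min' hex (by rw [hcl]; exact_mod_cast hplt)
      have hlow : (cs (k - 1) : ℝ) ≤ p := by
        have := Nat.find_min hex (show k - 1 < k by omega)
        push_neg at this
        exact this
      refine ⟨(a k : ℝ), (a k : ℝ) * p + (b k : ℝ), (cs k : ℝ) - p,
        hlam k hk1 hkl, by linarith, ?_⟩
      intro x h1 h2
      rw [one_mul] at h1 h2
      have hfx := haff k hk1 hkl x (by linarith) (by linarith)
      rw [hfx]; ring
    · -- left side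
      have hppos : 0 < p := hs2 rfl
      have hex : ∃ k : ℕ, p ≤ (cs k : ℝ) := ⟨ℓ, by rw [hcl]; exact_mod_cast hp1⟩
      set k := Nat.find hex with hkdef
      have hk : p ≤ (cs k : ℝ) := Nat.find_spec hex
      have hk1 : 1 ≤ k := by
        rcases Nat.eq_zero_or_pos k with h | h
        · exfalso
          have := hk
          rw [h, hc0] at this
          norm_num at this
          linarith
        · exact h
      have hkl : k ≤ ℓ := Nat.find_min' hex (by rw [hcl]; exact_mod_cast hp1)
      have hlow : (cs (k - 1) : ℝ) < p := by
        have := Nat.find_min hex (show k - 1 < k by omega)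
        push_neg at this
        exact this
      refine ⟨(a k : ℝ), (a k : ℝ) * p + (b k : ℝ), p - (cs (k - 1) : ℝ),
        hlam k hk1 hkl, by linarith, ?_⟩
      intro x h1 h2
      have h1' : x < p := by nlinarith
      have h2' : (cs (k - 1) : ℝ) < x := by nlinarith
      have hfx := haff k hk1 hkl x (le_of_lt h2') (lt_of_lt_of_le h1' hk)
      rw [hfx]; ring
  -- active side points are accumulation points
  have hActA : ∀ σ : ℝ, (σ = 1 ∨ σ = -1) → ∀ p : ℝ,
      (∀ d : ℝ, 0 < d → ∃ n : ℕ, 0 < σ * (f^[n] x0 - p) ∧ σ * (f^[n] x0 - p) < d) →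
      AccPt p (Filter.principal O) := by
    intro σ hσ p hp
    have hσabs : |σ| = 1 := by rcases hσ with rfl | rfl <;> simp
    rw [accPt_iff_nhds]
    intro U hU
    obtain ⟨ε, hε, hball⟩ := Metric.mem_nhds_iff.1 hU
    obtain ⟨n, h1, h2⟩ := hp ε hε
    refine ⟨f^[n] x0, ⟨?_, ⟨n, rfl⟩⟩, ?_⟩
    · apply hball
      rw [Metric.mem_ball, Real.dist_eq]
      have : |f^[n] x0 - p| = |σ * (f^[n] x0 - p)| := by
        rw [abs_mul, hσabs, one_mul]
      rw [this, abs_of_pos h1]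
      exact h2
    · intro hcon
      rw [hcon] at h1
      simp at h1
  -- there exists an accumulation point with an active side
  obtain ⟨p0, _, hp0acc⟩ := hOinf.exists_accPt_of_subset_isCompact isCompact_Icc hObd
  obtain ⟨σ, hσ, hp0⟩ : ∃ σ : ℝ, (σ = 1 ∨ σ = -1) ∧
      ∀ d : ℝ, 0 < d → ∃ n : ℕ, 0 < σ * (f^[n] x0 - p0) ∧ σ * (f^[n] x0 - p0) < d := by
    by_contra hcon
    push_neg at hcon
    obtain ⟨d1, hd1, hnd1⟩ := hcon 1 (Or.inl rfl)
    obtain ⟨d2, hd2, hnd2⟩ := hcon (-1) (Or.inr rfl)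
    rw [accPt_iff_nhds] at hp0acc
    obtain ⟨y, ⟨hyU, hyO⟩, hyne⟩ := hp0acc (Metric.ball p0 (min d1 d2))
      (Metric.ball_mem_nhds _ (lt_min hd1 hd2))
    rw [Metric.mem_ball, Real.dist_eq] at hyU
    obtain ⟨n, rfl⟩ := hyO
    rcases lt_or_gt_of_ne (sub_ne_zero.2 hyne) with h | h
    · -- y < p0
      have hc2 := hnd2 n (by nlinarith)
      have habs : |f^[n] x0 - p0| = -(f^[n] x0 - p0) := abs_of_neg h
      have hmin : min d1 d2 ≤ d2 := min_le_right _ _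
      nlinarith
    · have hc2 := hnd1 n (by nlinarith)
      have habs : |f^[n] x0 - p0| = f^[n] x0 - p0 := abs_of_pos h
      have hmin : min d1 d2 ≤ d1 := min_le_left _ _
      nlinarith
  -- the active set (for this σ)
  set Act : Set ℝ := {p : ℝ | ∀ d : ℝ, 0 < d →
      ∃ n : ℕ, 0 < σ * (f^[n] x0 - p) ∧ σ * (f^[n] x0 - p) < d} with hActdef
  have hActsubA : ∀ p ∈ Act, AccPt p (Filter.principal O) := fun p hp => hActA σ hσ p hp
  have hActfin : Act.Finite := hinfA.subset fun p hp => hActsubA p hp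
  haveI : Finite ↥Act := hActfin.to_subtype
  have hp0Act : p0 ∈ Act := hp0
  haveI : Nonempty ↥Act := ⟨⟨p0, hp0Act⟩⟩
  -- the one-step expansion with image in Act
  have hstep : ∀ p ∈ Act, ∃ α q δ : ℝ, lam ≤ α ∧ 0 < δ ∧ q ∈ Act ∧
      ∀ x : ℝ, 0 < σ * (x - p) → σ * (x - p) < δ → f x = α * (x - p) + q := by
    intro p hp
    have hy : ∀ d : ℝ, 0 < d → ∃ y : ℝ, y ∈ Set.Ico (0:ℝ) 1 ∧ (∃ n : ℕ, y = f^[n] x0) ∧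
        0 < σ * (y - p) ∧ σ * (y - p) < d := by
      intro d hd
      obtain ⟨n, h1, h2⟩ := hp d hd
      exact ⟨f^[n] x0, horb n, ⟨n, rfl⟩, h1, h2⟩
    -- preconditions for the side data
    have hpre : 0 ≤ p ∧ p ≤ 1 ∧ (σ = 1 → p < 1) ∧ (σ = -1 → 0 < p) := by
      rcases hσ with rfl | rfl
      · have hplt : p < 1 := by
          obtain ⟨y, hy1, _, h1, _⟩ := hy 1 one_pos
          nlinarith [hy1.2]
        have hpge : 0 ≤ p := by
          by_contra hneg
          push_neg at hneg
          obtain ⟨y, hy1, _, h1, h2⟩ := hy (-p) (by linarith)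
          nlinarith [hy1.1]
        exact ⟨hpge, le_of_lt hplt, fun _ => hplt, fun h => absurd h (by norm_num)⟩
      · have hppos : 0 < p := by
          obtain ⟨y, hy1, _, h1, _⟩ := hy 1 one_pos
          nlinarith [hy1.1]
        have hple : p ≤ 1 := by
          by_contra hcon
          push_neg at hcon
          obtain ⟨y, hy1, _, h1, h2⟩ := hy (p - 1) (by linarith)
          nlinarith [hy1.2]
        exact ⟨le_of_lt hppos, hple, fun h => absurd h (by norm_num), fun _ => hppos⟩
    obtain ⟨hpre1, hpre2, hpre3, hpre4⟩ := hpre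
    obtain ⟨α, q, δ, hα, hδ, hf2⟩ := hside σ hσ p hpre1 hpre2 hpre3 hpre4
    have hαpos : 0 < α := by linarith
    refine ⟨α, q, δ, hα, hδ, ?_, hf2⟩
    intro ε hε
    obtain ⟨n, h1, h2⟩ := hp (min δ (ε / α)) (lt_min hδ (div_pos hε hαpos))
    refine ⟨n + 1, ?_, ?_⟩
    · rw [Function.iterate_succ_apply', hf2 _ h1 (lt_of_lt_of_le h2 (min_le_left _ _))]
      have : σ * (α * (f^[n] x0 - p) + q - q) = α * (σ * (f^[n] x0 - p)) := by ring
      rw [this]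
      exact mul_pos hαpos h1
    · rw [Function.iterate_succ_apply', hf2 _ h1 (lt_of_lt_of_le h2 (min_le_left _ _))]
      have heq : σ * (α * (f^[n] x0 - p) + q - q) = α * (σ * (f^[n] x0 - p)) := by ring
      rw [heq]
      have h2' : σ * (f^[n] x0 - p) < ε / α := lt_of_lt_of_le h2 (min_le_right _ _)
      calc α * (σ * (f^[n] x0 - p)) < α * (ε / α) := by
            exact mul_lt_mul_of_pos_left h2' hαpos
        _ = ε := by field_simp
  -- choose data functions on the subtype
  have hstep' : ∀ s : {p : ℝ // p ∈ Act}, ∃ α q δ : ℝ, lam ≤ α ∧ 0 < δ ∧ q ∈ Act ∧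
      ∀ x : ℝ, 0 < σ * (x - (s : ℝ)) → σ * (x - (s : ℝ)) < δ → f x = α * (x - (s : ℝ)) + q :=
    fun s => hstep s s.2
  choose α q δ hα hδ hq hf2 using hstep'
  set Q : {p : ℝ // p ∈ Act} → {p : ℝ // p ∈ Act} := fun s => ⟨q s, hq s⟩ with hQdef
  set u : ℕ → {p : ℝ // p ∈ Act} := fun t => Q^[t] ⟨p0, hp0Act⟩ with hudef
  have hu : ∀ t : ℕ, ((u (t + 1) : ℝ)) = q (u t) := by
    intro t
    have : u (t + 1) = Q (u t) := Function.iterate_succ_apply' Q t _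
    rw [this]
  -- uniform bounds
  obtain ⟨sM, hsM⟩ := Finite.exists_max α
  set M : ℝ := α sM with hMdef
  have hMpos : 0 < M := by
    have := hα sM
    linarith
  obtain ⟨sD, hsD⟩ := Finite.exists_min δ
  set Δ : ℝ := δ sD with hDdef
  have hΔpos : 0 < Δ := hδ sD
  -- minimal gap between distinct accumulation points
  obtain ⟨g, hgpos, hgap⟩ : ∃ g : ℝ, 0 < g ∧ ∀ p, AccPt p (Filter.principal O) →
      ∀ r, AccPt r (Filter.principal O) → p ≠ r → g ≤ |p - r| := by
    set AA : Set ℝ := {p : ℝ | AccPt p (Filter.principal O)} with hAAdef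
    have hAAfin : AA.Finite := hinfA
    set D : Set ℝ := (fun pr : ℝ × ℝ => |pr.1 - pr.2|) '' ((AA ×ˢ AA) ∩ {pr | pr.1 ≠ pr.2})
      with hDdef2
    have hDfin : D.Finite := Set.Finite.image _ (((hAAfin.prod hAAfin).inter_of_left _))
    rcases D.eq_empty_or_nonempty with hDe | hDne
    · refine ⟨1, one_pos, ?_⟩
      intro p hp r hr hne
      exfalso
      have : |p - r| ∈ D := ⟨(p, r), ⟨⟨hp, hr⟩, hne⟩, rfl⟩
      rw [hDe] at this
      exact this
    · obtain ⟨g, hgD, hgmin⟩ := Set.exists_min_image D id hDfin hDne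
      obtain ⟨⟨p1, r1⟩, ⟨⟨hp1, hr1⟩, hne1⟩, hge⟩ := hgD
      refine ⟨g, ?_, ?_⟩
      · rw [← hge]
        exact abs_pos.2 (sub_ne_zero.2 hne1)
      · intro p hp r hr hne
        exact hgmin _ ⟨(p, r), ⟨⟨hp, hr⟩, hne⟩, rfl⟩
  set Δ' : ℝ := min Δ (g / (2 * M)) with hΔ'def
  have hΔ'pos : 0 < Δ' := lt_min hΔpos (div_pos hgpos (by linarith))
  have hΔ'Δ : Δ' ≤ Δ := min_le_left _ _
  -- the key expansion iteration
  have key : ∀ N : ℕ, ∀ t : ℕ, ∀ y : ℝ,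
      0 < σ * (y - (u t : ℝ)) → σ * (y - (u t : ℝ)) < Δ' →
      Δ' ≤ lam ^ N * (σ * (y - (u t : ℝ))) →
      ∃ m : ℕ, Δ' ≤ σ * (f^[m] y - (u (t + m) : ℝ)) ∧
        σ * (f^[m] y - (u (t + m) : ℝ)) ≤ M * Δ' := by
    intro N
    induction N with
    | zero =>
      intro t y h1 h2 h3
      rw [pow_zero, one_mul] at h3
      exact absurd h2 (not_lt.2 h3)
    | succ N ih =>
      intro t y h1 h2 h3
      have hαpos : 0 < α (u t) := by linarith [hα (u t)]
      have hdlt : σ * (y - (u t : ℝ)) < δ (u t) :=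
        lt_of_lt_of_le h2 (le_trans hΔ'Δ (hsD (u t)))
      have hy' : f y = α (u t) * (y - (u t : ℝ)) + q (u t) := hf2 (u t) y h1 hdlt
      have hd' : σ * (f y - (u (t + 1) : ℝ)) = α (u t) * (σ * (y - (u t : ℝ))) := by
        rw [hu t, hy']; ring
      have hpos' : 0 < σ * (f y - (u (t + 1) : ℝ)) := by
        rw [hd']; exact mul_pos hαpos h1
      by_cases hcase : σ * (f y - (u (t + 1) : ℝ)) < Δ'
      · have h3' : Δ' ≤ lam ^ N * (σ * (f y - (u (t + 1) : ℝ))) := by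
          rw [hd']
          have hl1 : lam * (σ * (y - (u t : ℝ))) ≤ α (u t) * (σ * (y - (u t : ℝ))) :=
            mul_le_mul_of_nonneg_right (hα (u t)) (le_of_lt h1)
          have hl2 : lam ^ N * (lam * (σ * (y - (u t : ℝ)))) ≤
              lam ^ N * (α (u t) * (σ * (y - (u t : ℝ)))) :=
            mul_le_mul_of_nonneg_left hl1 (pow_nonneg (by linarith) N)
          calc Δ' ≤ lam ^ (N + 1) * (σ * (y - (u t : ℝ))) := h3
            _ = lam ^ N * (lam * (σ * (y - (u t : ℝ)))) := by ring
            _ ≤ lam ^ N * (α (u t) * (σ * (y - (u t : ℝ)))) := hl2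
        obtain ⟨m, hm1, hm2⟩ := ih (t + 1) (f y) hpos' hcase h3'
        refine ⟨m + 1, ?_, ?_⟩
        · rw [Function.iterate_succ_apply]
          have hidx : t + (m + 1) = (t + 1) + m := by omega
          rw [hidx]
          exact hm1
        · rw [Function.iterate_succ_apply]
          have hidx : t + (m + 1) = (t + 1) + m := by omega
          rw [hidx]
          exact hm2
      · push_neg at hcase
        refine ⟨1, ?_, ?_⟩
        · rw [Function.iterate_one]
          exact hcase
        · rw [Function.iterate_one, hd']
          calc α (u t) * (σ * (y - (u t : ℝ))) ≤ M * (σ * (y - (u t : ℝ))) :=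
                mul_le_mul_of_nonneg_right (hsM (u t)) (le_of_lt h1)
            _ ≤ M * Δ' := mul_le_mul_of_nonneg_left (le_of_lt h2) (le_of_lt hMpos)
  -- the annulus set
  set K : Set ℝ := ⋃ s : {p : ℝ // p ∈ Act},
      {z : ℝ | Δ' ≤ σ * (z - (s : ℝ)) ∧ σ * (z - (s : ℝ)) ≤ M * Δ'} with hKdef
  have hKclosed : IsClosed K := by
    apply isClosed_iUnion_of_finite
    intro s
    have : {z : ℝ | Δ' ≤ σ * (z - (s : ℝ)) ∧ σ * (z - (s : ℝ)) ≤ M * Δ'} =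
        (fun z : ℝ => σ * (z - (s : ℝ))) ⁻¹' (Set.Icc Δ' (M * Δ')) := rfl
    rw [this]
    exact IsClosed.preimage (by fun_prop) isClosed_Icc
  -- landing lemma
  have hland : ∀ n : ℕ, 0 < σ * (f^[n] x0 - p0) → σ * (f^[n] x0 - p0) < Δ' →
      ∃ m : ℕ, n ≤ m ∧ f^[m] x0 ∈ K := by
    intro n h1 h2
    obtain ⟨N, hN⟩ : ∃ N : ℕ, Δ' ≤ lam ^ N * (σ * (f^[n] x0 - p0)) := by
      obtain ⟨N, hN⟩ := pow_unbounded_of_one_lt (Δ' / (σ * (f^[n] x0 - p0))) hlam1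
      exact ⟨N, le_of_lt (by rwa [div_lt_iff₀ h1] at hN)⟩
    have hu0 : ((u 0 : ℝ)) = p0 := rfl
    obtain ⟨m, hm1, hm2⟩ := key N 0 (f^[n] x0) (by rwa [hu0]) (by rwa [hu0]) (by rwa [hu0])
    refine ⟨m + n, Nat.le_add_left n m, ?_⟩
    rw [Function.iterate_add_apply]
    rw [Set.mem_iUnion]
    refine ⟨u (0 + m), hm1, hm2⟩
  -- arbitrarily large starting indices
  have hbig : ∀ B : ℕ, ∃ n : ℕ, B < n ∧ 0 < σ * (f^[n] x0 - p0) ∧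
      σ * (f^[n] x0 - p0) < Δ' := by
    intro B
    set F : Finset ℕ := (Finset.range (B + 1)).filter
      (fun n => 0 < σ * (f^[n] x0 - p0)) with hFdef
    set G : Finset ℝ := F.image (fun n => σ * (f^[n] x0 - p0)) with hGdef
    have hη : ∃ η : ℝ, 0 < η ∧ η ≤ Δ' ∧ ∀ e ∈ G, η ≤ e := by
      rcases G.eq_empty_or_nonempty with hGe | hGne
      · exact ⟨Δ', hΔ'pos, le_refl _, by rw [hGe]; intro e he; simp at he⟩
      · refine ⟨min Δ' (G.min' hGne), lt_min hΔ'pos ?_, min_le_left _ _, ?_⟩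
        · obtain ⟨n, hn, hne⟩ := Finset.mem_image.1 (G.min'_mem hGne)
          rw [← hne]
          exact (Finset.mem_filter.1 hn).2
        · intro e he
          exact le_trans (min_le_right _ _) (Finset.min'_le _ _ he)
    obtain ⟨η, hη1, hη2, hη3⟩ := hη
    obtain ⟨n, hn1, hn2⟩ := hp0 η hη1
    refine ⟨n, ?_, hn1, lt_of_lt_of_le hn2 hη2⟩
    by_contra hcon
    push_neg at hcon
    have hnF : n ∈ F := Finset.mem_filter.2 ⟨Finset.mem_range.2 (by omega), hn1⟩
    have : η ≤ σ * (f^[n] x0 - p0) := hη3 _ (Finset.mem_image_of_mem _ hnF)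
    linarith
  -- infinitely many orbit indices land in K
  have hMKinf : {m : ℕ | f^[m] x0 ∈ K}.Infinite := by
    by_contra hcon
    rw [Set.not_infinite] at hcon
    obtain ⟨B, hB⟩ := hcon.bddAbove
    obtain ⟨n, hn1, hn2, hn3⟩ := hbig B
    obtain ⟨m, hm1, hm2⟩ := hland n hn2 hn3
    have : m ≤ B := hB hm2
    omega
  -- extract a second accumulation point near some active point
  set T : Set ℝ := (fun m : ℕ => f^[m] x0) '' {m : ℕ | f^[m] x0 ∈ K} with hTdef
  have hTinf : T.Infinite := Set.Infinite.image (Set.injOn_of_injective hinj) hMKinf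
  have hTsub : T ⊆ Set.Icc (0 : ℝ) 1 := by
    rintro y ⟨m, _, rfl⟩
    exact ⟨(horb m).1, le_of_lt (horb m).2⟩
  obtain ⟨q', _, hq'acc⟩ := hTinf.exists_accPt_of_subset_isCompact isCompact_Icc hTsub
  have hq'A : AccPt q' (Filter.principal O) := by
    apply hq'acc.mono
    apply principal_mono.2
    rintro y ⟨m, _, rfl⟩
    exact ⟨m, rfl⟩
  have hq'K : q' ∈ K := by
    have hcl : ClusterPt q' (Filter.principal T) := AccPt.clusterPt hq'acc
    have hclosure : q' ∈ closure T := mem_closure_iff_clusterPt.2 hcl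
    have hTK : T ⊆ K := by
      rintro y ⟨m, hm, rfl⟩
      exact hm
    exact closure_minimal hTK hKclosed hclosure
  rw [Set.mem_iUnion] at hq'K
  obtain ⟨s, hs1, hs2⟩ := hq'K
  have hsA : AccPt (s : ℝ) (Filter.principal O) := hActsubA _ s.2
  have hne : q' ≠ (s : ℝ) := by
    intro hcon
    rw [hcon] at hs1
    simp at hs1
    linarith
  have hgle : g ≤ |q' - (s : ℝ)| := hgap _ hq'A _ hsA hne
  have hσabs : |σ| = 1 := by rcases hσ with rfl | rfl <;> simp
  have habs : |q' - (s : ℝ)| = σ * (q' - (s : ℝ)) := by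
    have h1 : 0 < σ * (q' - (s : ℝ)) := lt_of_lt_of_le hΔ'pos hs1
    calc |q' - (s : ℝ)| = |σ| * |q' - (s : ℝ)| := by rw [hσabs, one_mul]
      _ = |σ * (q' - (s : ℝ))| := (abs_mul σ _).symm
      _ = σ * (q' - (s : ℝ)) := abs_of_pos h1
  have hΔ'le : Δ' ≤ g / (2 * M) := min_le_right _ _
  have hMΔ' : M * Δ' ≤ g / 2 := by
    have := mul_le_mul_of_nonneg_left hΔ'le (le_of_lt hMpos)
    calc M * Δ' ≤ M * (g / (2 * M)) := this
      _ = g / 2 := by field_simp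
  have : g ≤ g / 2 := by
    calc g ≤ |q' - (s : ℝ)| := hgle
      _ = σ * (q' - (s : ℝ)) := habs
      _ ≤ M * Δ' := hs2
      _ ≤ g / 2 := hMΔ'
  linarith
end
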